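/- Let x₀, v_max, a > 0 and t₀ < t_f1 ≤ t_f, with Δ := t_f − t₀ and S := t_f − t_f1. Assume x₀/v_max ≤ Δ < x₀/v_max + v_max/a. Set u := v_max − √(a(v_max·Δ − x₀)), t_acc := t_f1 − (v_max − u)/a, t_dec := t_acc − (v_max − u)/a, and assume t_dec ≥ t₀. Define the piecewise trajectory x* on [t₀, t_f] by: x*(s) = −x₀ + v_max(s − t₀) for s ∈ [t₀, t_dec]; x*(s) = −x₀ + v_max(s − t₀) − (a/2)(s − t_dec)² for s ∈ [t_dec, t_acc]; x*(s) = −x₀ + v_max(t_acc − t₀) − (v_max − u)²/(2a) + u(s − t_acc) + (a/2)(s − t_acc)² for s ∈ [t_acc, t_f1]; x*(s) = −v_max·S + v_max(s − t_f1) for s ∈ [t_f1, t_f]. Then every x ∈ Π(t₀, t_f, x₀, v_max, a) satisfying x(t_f1) ≤ −v_max·S also satisfies x(s) ≤ x*(s) for all s ∈ [t₀, t_f]. -/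

import Mathlib

open Set

/-- If the derivative of `x` is bounded above by the linear function `B + C t` on `(α, β)`,
then the increment of `x` is bounded by the increment of the corresponding quadratic. -/
lemma traj_slope_le (x : ℝ → ℝ) {t₀ tf α β : ℝ} (B C : ℝ)
    (hc : ContinuousOn x (Set.Icc t₀ tf))
    (hd : ∀ t ∈ Set.Ioo t₀ tf, DifferentiableAt ℝ x t)
    (h1 : t₀ ≤ α) (h2 : β ≤ tf) (hab : α ≤ β)
    (hO : ∀ t ∈ Set.Ioo α β, deriv x t ≤ B + C * t) :
    x β - x α ≤ B * (β - α) + C / 2 * (β ^ 2 - α ^ 2) := by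
  have hsub : Set.Icc α β ⊆ Set.Icc t₀ tf := Set.Icc_subset_Icc h1 h2
  have hsub' : Set.Ioo α β ⊆ Set.Ioo t₀ tf := Set.Ioo_subset_Ioo h1 h2
  have hq : ∀ t : ℝ, HasDerivAt (fun t : ℝ => B * t + C / 2 * t ^ 2) (B + C * t) t := by
    intro t
    have ha1 := (hasDerivAt_id t).const_mul B
    have ha2 := (hasDerivAt_pow 2 t).const_mul (C / 2)
    exact (ha1.add ha2).congr_deriv (by norm_num; ring)
  have hanti : AntitoneOn (fun t => x t - (B * t + C / 2 * t ^ 2)) (Set.Icc α β) := by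
    apply antitoneOn_of_deriv_nonpos (convex_Icc α β)
    · exact (hc.mono hsub).sub (Continuous.continuousOn (by continuity))
    · intro t ht
      rw [interior_Icc] at ht
      exact ((hd t (hsub' ht)).sub (hq t).differentiableAt).differentiableWithinAt
    · intro t ht
      rw [interior_Icc] at ht
      have hx := (hd t (hsub' ht)).hasDerivAt
      have hder : deriv (fun t => x t - (B * t + C / 2 * t ^ 2)) t
          = deriv x t - (B + C * t) := (hx.sub (hq t)).deriv
      rw [hder]
      have := hO t ht
      linarith
  have := hanti (Set.left_mem_Icc.2 hab) (Set.right_mem_Icc.2 hab) hab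
  simp only at this
  linarith

/-- Lower-bound version. -/
lemma traj_slope_ge (x : ℝ → ℝ) {t₀ tf α β : ℝ} (B C : ℝ)
    (hc : ContinuousOn x (Set.Icc t₀ tf))
    (hd : ∀ t ∈ Set.Ioo t₀ tf, DifferentiableAt ℝ x t)
    (h1 : t₀ ≤ α) (h2 : β ≤ tf) (hab : α ≤ β)
    (hO : ∀ t ∈ Set.Ioo α β, B + C * t ≤ deriv x t) :
    B * (β - α) + C / 2 * (β ^ 2 - α ^ 2) ≤ x β - x α := by
  have hsub : Set.Icc α β ⊆ Set.Icc t₀ tf := Set.Icc_subset_Icc h1 h2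
  have hsub' : Set.Ioo α β ⊆ Set.Ioo t₀ tf := Set.Ioo_subset_Ioo h1 h2
  have hq : ∀ t : ℝ, HasDerivAt (fun t : ℝ => B * t + C / 2 * t ^ 2) (B + C * t) t := by
    intro t
    have ha1 := (hasDerivAt_id t).const_mul B
    have ha2 := (hasDerivAt_pow 2 t).const_mul (C / 2)
    exact (ha1.add ha2).congr_deriv (by norm_num; ring)
  have hmono : MonotoneOn (fun t => x t - (B * t + C / 2 * t ^ 2)) (Set.Icc α β) := by
    apply monotoneOn_of_deriv_nonneg (convex_Icc α β)
    · exact (hc.mono hsub).sub (Continuous.continuousOn (by continuity))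
    · intro t ht
      rw [interior_Icc] at ht
      exact ((hd t (hsub' ht)).sub (hq t).differentiableAt).differentiableWithinAt
    · intro t ht
      rw [interior_Icc] at ht
      have hx := (hd t (hsub' ht)).hasDerivAt
      have hder : deriv (fun t => x t - (B * t + C / 2 * t ^ 2)) t
          = deriv x t - (B + C * t) := (hx.sub (hq t)).deriv
      rw [hder]
      have := hO t ht
      linarith
  have := hmono (Set.left_mem_Icc.2 hab) (Set.right_mem_Icc.2 hab) hab
  simp only at this
  linarith



/-- The class `Π(t₀, t_f, x₀, v_max, a)` of compatible trajectories: continuously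
differentiable on `[t₀, t_f]`, derivative Lipschitz with constant `a` (acceleration
bounded by `a`), speed in `[0, v_max]`, entering the control region of length `x₀` at
speed `v_max` and reaching the intersection (position `0`) at speed `v_max`. -/
def CompatTraj (t₀ tf x₀ vmax a : ℝ) : Set (ℝ → ℝ) :=
  {x | ContDiffOn ℝ 1 x (Set.Icc t₀ tf) ∧
    LipschitzOnWith (Real.toNNReal a) (deriv x) (Set.Icc t₀ tf) ∧
    (∀ s ∈ Set.Icc t₀ tf, 0 ≤ deriv x s ∧ deriv x s ≤ vmax) ∧
    x t₀ = -x₀ ∧ deriv x t₀ = vmax ∧ x tf = 0 ∧ deriv x tf = vmax}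

/-- The closed-form trajectory without a full stop: drive at `v_max`, decelerate at `−a`
to the minimum speed `u = v_max − √(a(v_max·Δ − x₀))`, immediately accelerate at `a`
back to `v_max` at the platoon head's crossing time `t_f1`, then drive at `v_max`. -/
noncomputable def xStarNoStop (x₀ vmax a t₀ tf1 tf : ℝ) (s : ℝ) : ℝ :=
  let Δ := tf - t₀
  let S := tf - tf1
  let u := vmax - Real.sqrt (a * (vmax * Δ - x₀))
  let tacc := tf1 - (vmax - u) / a
  let tdec := tacc - (vmax - u) / a
  if s ≤ tdec then -x₀ + vmax * (s - t₀)
  else if s ≤ tacc then -x₀ + vmax * (s - t₀) - a / 2 * (s - tdec) ^ 2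
  else if s ≤ tf1 then
    -x₀ + vmax * (tacc - t₀) - (vmax - u) ^ 2 / (2 * a)
      + u * (s - tacc) + a / 2 * (s - tacc) ^ 2
  else -vmax * S + vmax * (s - tf1)

set_option maxHeartbeats 2000000 in
/-- Optimality part 1 (non-stopping case): the closed-form non-stopping trajectory
pointwise dominates every compatible trajectory satisfying the safety constraint
`x(t_f1) ≤ −v_max·S` at the crossing time of the head of the platoon. -/
theorem xStarNoStop_pointwise_optimal
    (x₀ vmax a t₀ tf1 tf : ℝ)
    (hx₀ : 0 < x₀) (hv : 0 < vmax) (ha : 0 < a)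
    (ht₀ : t₀ < tf1) (htf : tf1 ≤ tf)
    (hΔ₁ : x₀ / vmax ≤ tf - t₀)
    (hΔ₂ : tf - t₀ < x₀ / vmax + vmax / a)
    (hdec : tf1 - 2 * (vmax - (vmax - Real.sqrt (a * (vmax * (tf - t₀) - x₀)))) / a ≥ t₀) :
    ∀ x ∈ CompatTraj t₀ tf x₀ vmax a,
      x tf1 ≤ -vmax * (tf - tf1) →
      ∀ s ∈ Set.Icc t₀ tf, x s ≤ xStarNoStop x₀ vmax a t₀ tf1 tf s := by
  intro x hxmem hsafe s hs
  obtain ⟨hC, hL, hbd, hx0, hd0, hxf, hdf⟩ := hxmem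
  have h0f : t₀ ≤ tf := le_trans ht₀.le htf
  have hcont : ContinuousOn x (Set.Icc t₀ tf) := hC.continuousOn
  have hdiff : ∀ t ∈ Set.Ioo t₀ tf, DifferentiableAt ℝ x t := by
    intro t ht
    exact ((hC.differentiableOn one_ne_zero) t (Set.Ioo_subset_Icc_self ht)).differentiableAt
      (Icc_mem_nhds ht.1 ht.2)
  have hLip : ∀ σ ∈ Set.Icc t₀ tf, ∀ τ ∈ Set.Icc t₀ tf,
      |deriv x σ - deriv x τ| ≤ a * |σ - τ| := by
    intro σ hσ τ hτ
    have h := hL.dist_le_mul σ hσ τ hτ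
    rw [Real.dist_eq, Real.dist_eq] at h
    have hcoe : (Real.toNNReal a : ℝ) = a := Real.coe_toNNReal a ha.le
    rw [hcoe] at h
    exact h
  set r := Real.sqrt (a * (vmax * (tf - t₀) - x₀)) with hrdef
  have hnn : 0 ≤ vmax * (tf - t₀) - x₀ := by
    have h := (div_le_iff₀ hv).1 hΔ₁
    nlinarith
  have hr0 : 0 ≤ r := Real.sqrt_nonneg _
  have hr2 : r ^ 2 = a * (vmax * (tf - t₀) - x₀) := Real.sq_sqrt (mul_nonneg ha.le hnn)
  set ρ := r / a with hρdef
  have hρ0 : 0 ≤ ρ := div_nonneg hr0 ha.le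
  have hrρ : r = a * ρ := by rw [hρdef]; field_simp
  have haρ : a * ρ ^ 2 = vmax * (tf - t₀) - x₀ := by
    have h : (a * ρ) ^ 2 = a * (vmax * (tf - t₀) - x₀) := by rw [← hrρ]; exact hr2
    exact mul_left_cancel₀ (ne_of_gt ha)
      (show a * (a * ρ ^ 2) = a * (vmax * (tf - t₀) - x₀) by rw [← h]; ring)
  have hdec' : t₀ ≤ tf1 - 2 * ρ := by
    have h : 2 * (vmax - (vmax - r)) / a = 2 * ρ := by rw [hρdef]; ring
    rw [ge_iff_le, h] at hdec
    linarith
  -- safety equality at tf1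
  have hslope_fin : x tf - x tf1 ≤ vmax * (tf - tf1) := by
    have h := traj_slope_le x vmax 0 hcont hdiff (le_of_lt ht₀) le_rfl htf
      (fun t ht => by
        have := (hbd t ⟨le_trans ht₀.le ht.1.le, ht.2.le⟩).2
        simpa using this)
    linarith [h]
  have hxtf1 : x tf1 = -vmax * (tf - tf1) := by
    apply le_antisymm hsafe
    rw [hxf] at hslope_fin
    nlinarith [hslope_fin]
  have hdtf1 : deriv x tf1 = vmax := by
    rcases eq_or_lt_of_le htf with he | hlt
    · rw [he]; exact hdf
    · have haff : ∀ τ ∈ Set.Icc tf1 tf, x τ = vmax * (τ - tf) := by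
        intro τ hτ
        have b1 := traj_slope_le x vmax 0 hcont hdiff ht₀.le (hτ.2) hτ.1
          (fun t ht => by
            have := (hbd t ⟨le_trans ht₀.le ht.1.le, le_trans ht.2.le hτ.2⟩).2
            simpa using this)
        have b2 := traj_slope_le x vmax 0 hcont hdiff (le_trans ht₀.le hτ.1) le_rfl hτ.2
          (fun t ht => by
            have := (hbd t ⟨le_trans ht₀.le (le_trans hτ.1 ht.1.le), ht.2.le⟩).2
            simpa using this)
        rw [hxf] at b2
        nlinarith [b1, b2, hxtf1]
      have hderiv_open : ∀ τ ∈ Set.Ioo tf1 tf, deriv x τ = vmax := by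
        intro τ hτ
        have hev : x =ᶠ[nhds τ] (fun t => vmax * (t - tf)) := by
          filter_upwards [Ioo_mem_nhds hτ.1 hτ.2] with t ht
          exact haff t (Set.Ioo_subset_Icc_self ht)
        rw [hev.deriv_eq]
        have hda : HasDerivAt (fun t : ℝ => vmax * (t - tf)) vmax τ := by
          simpa using ((hasDerivAt_id τ).sub_const tf).const_mul vmax
        exact hda.deriv
      have hb : ∀ ε > (0:ℝ), |deriv x tf1 - vmax| ≤ ε := by
        intro ε hε
        set τ := tf1 + min (ε / a) (tf - tf1) / 2 with hτdef
        have hmin : 0 < min (ε / a) (tf - tf1) := lt_min (div_pos hε ha) (sub_pos.2 hlt)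
        have h1 : tf1 < τ := by rw [hτdef]; linarith
        have h2 : τ < tf := by
          have := min_le_right (ε / a) (tf - tf1); rw [hτdef]; linarith
        have h3 := hderiv_open τ ⟨h1, h2⟩
        have h4 := hLip tf1 ⟨ht₀.le, htf⟩ τ ⟨le_trans ht₀.le h1.le, h2.le⟩
        rw [h3] at h4
        have h5 : |tf1 - τ| = min (ε / a) (tf - tf1) / 2 := by
          rw [abs_sub_comm, abs_of_nonneg (by linarith)]
          rw [hτdef]; ring
        rw [h5] at h4
        have h6 : a * (min (ε / a) (tf - tf1) / 2) ≤ ε := by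
          have hl := min_le_left (ε / a) (tf - tf1)
          have he : a * (ε / a) = ε := by field_simp
          nlinarith
        linarith
      have habs : |deriv x tf1 - vmax| ≤ 0 := by
        by_contra hne
        push_neg at hne
        have := hb (|deriv x tf1 - vmax| / 2) (by linarith)
        linarith
      have hnng := abs_nonneg (deriv x tf1 - vmax)
      have heq : |deriv x tf1 - vmax| = 0 := le_antisymm habs hnng
      rw [abs_eq_zero, sub_eq_zero] at heq
      exact heq
  -- anchored lower bound at tf1
  have hanchor_tf1 : ∀ t ∈ Set.Icc t₀ tf1, vmax - a * (tf1 - t) ≤ deriv x t := by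
    intro t ht
    have h := hLip t ⟨ht.1, le_trans ht.2 htf⟩ tf1 ⟨ht₀.le, htf⟩
    rw [hdtf1] at h
    have habs : |t - tf1| = tf1 - t := by
      rw [abs_sub_comm, abs_of_nonneg (by linarith [ht.2])]
    rw [habs] at h
    have := (abs_le.1 h).1
    linarith
  -- closed form of the target
  have hst : xStarNoStop x₀ vmax a t₀ tf1 tf s =
      if s ≤ tf1 - ρ - ρ then -x₀ + vmax * (s - t₀)
      else if s ≤ tf1 - ρ then -x₀ + vmax * (s - t₀) - a / 2 * (s - (tf1 - ρ - ρ)) ^ 2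
      else if s ≤ tf1 then
        -x₀ + vmax * (tf1 - ρ - t₀) - a * ρ ^ 2 / 2
          + (vmax - a * ρ) * (s - (tf1 - ρ)) + a / 2 * (s - (tf1 - ρ)) ^ 2
      else -vmax * (tf - tf1) + vmax * (s - tf1) := by
    rw [xStarNoStop]
    simp only [← hrdef]
    rw [show vmax - (vmax - r) = r from by ring,
      show r / a = ρ from hρdef.symm,
      show r ^ 2 / (2 * a) = a * ρ ^ 2 / 2 from by rw [hrρ]; field_simp,
      show (vmax - r : ℝ) = vmax - a * ρ from by rw [hrρ]]
  rw [hst]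
  split_ifs with h1 h2 h3
  · -- s ≤ tdec : line bound
    have b := traj_slope_le x vmax 0 hcont hdiff le_rfl hs.2 hs.1
      (fun t ht => by
        have := (hbd t ⟨ht.1.le, le_trans ht.2.le hs.2⟩).2
        simpa using this)
    rw [hx0] at b
    linarith
  · -- tdec < s ≤ tacc : middle parabola
    push_neg at h1
    have hstf1 : s ≤ tf1 := by linarith
    have hw := hbd s hs
    set w := deriv x s with hwdef
    set γ := (vmax - w) / a with hγdef
    have hγ0 : 0 ≤ γ := div_nonneg (by linarith [hw.2]) ha.le
    have hwγ : w = vmax - a * γ := by rw [hγdef]; field_simp; ring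
    have hanchor_s_up : ∀ t ∈ Set.Icc t₀ s, deriv x t ≤ (w + a * s) + (-a) * t := by
      intro t ht
      have h := hLip t ⟨ht.1, le_trans ht.2 hs.2⟩ s hs
      have habs : |t - s| = s - t := by
        rw [abs_sub_comm, abs_of_nonneg (by linarith [ht.2])]
      rw [habs] at h
      have := (abs_le.1 h).2
      rw [← hwdef] at this
      linarith
    have hanchor_s_lo : ∀ t ∈ Set.Icc s tf, (w + a * s) + (-a) * t ≤ deriv x t := by
      intro t ht
      have h := hLip t ⟨le_trans hs.1 ht.1, ht.2⟩ s hs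
      have habs : |t - s| = t - s := abs_of_nonneg (by linarith [ht.1])
      rw [habs] at h
      have := (abs_le.1 h).1
      rw [← hwdef] at this
      linarith
    rcases le_or_gt w (vmax - a * (s - (tf1 - ρ - ρ))) with hcase | hcase
    · -- Case A : slow speed at s, forward bound suffices
      have hAγ : s - (tf1 - ρ - ρ) ≤ γ := by
        rw [hγdef, le_div_iff₀ ha]
        linarith
      have hsd : 0 ≤ s - (tf1 - ρ - ρ) := by linarith
      have hsq : a / 2 * (s - (tf1 - ρ - ρ)) ^ 2 ≤ a / 2 * γ ^ 2 := by
        have h := pow_le_pow_left₀ hsd hAγ 2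
        have := mul_le_mul_of_nonneg_left h (by positivity : (0:ℝ) ≤ a / 2)
        linarith
      rcases le_or_gt t₀ (s - γ) with hm | hm
      · -- A1 : the deceleration-to-w phase starts after t₀
        have b1 := traj_slope_le x vmax 0 hcont hdiff le_rfl
          (show s - γ ≤ tf by linarith [hs.2]) hm
          (fun t ht => by
            have := (hbd t ⟨ht.1.le, by linarith [ht.2.le, hs.2]⟩).2
            simpa using this)
        have b2 := traj_slope_le x (w + a * s) (-a) hcont hdiff hm hs.2
          (show s - γ ≤ s by linarith)
          (fun t ht => hanchor_s_up t ⟨le_trans hm ht.1.le, ht.2.le⟩)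
        rw [hx0] at b1
        rw [hwγ] at b2
        have hkey : (vmax - a * γ + a * s) * (s - (s - γ))
            + (-a) / 2 * (s ^ 2 - (s - γ) ^ 2) = vmax * γ - a / 2 * γ ^ 2 := by ring
        linarith [b1, b2, hsq]
      · -- A2 : pure quadratic forward bound from t₀
        have b2 := traj_slope_le x (w + a * s) (-a) hcont hdiff le_rfl hs.2 hs.1
          (fun t ht => hanchor_s_up t ⟨ht.1.le, ht.2.le⟩)
        rw [hx0, hwγ] at b2
        have he0 : 0 ≤ s - t₀ := by linarith [hs.1]
        have hsd2 : s - (tf1 - ρ - ρ) ≤ s - t₀ := by linarith [hdec']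
        have hsq2 : a / 2 * (s - (tf1 - ρ - ρ)) ^ 2 ≤ a / 2 * (s - t₀) ^ 2 := by
          have h := pow_le_pow_left₀ hsd hsd2 2
          have := mul_le_mul_of_nonneg_left h (by positivity : (0:ℝ) ≤ a / 2)
          linarith
        have hge : a * (s - t₀) * (s - t₀) ≤ a * (s - t₀) * γ :=
          mul_le_mul_of_nonneg_left (by linarith : s - t₀ ≤ γ) (mul_nonneg ha.le he0)
        linarith [b2, hsq2, hge]
    · -- Case B : fast speed at s, combined backward bound
      have hBγ : γ ≤ s - (tf1 - ρ - ρ) := by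
        rw [hγdef, div_le_iff₀ ha]
        linarith
      have hρd : ρ ≤ tf1 - s := by linarith [h2]
      have hγle : γ ≤ tf1 - s := by linarith
      have h_s_tm : s ≤ s + (tf1 - s - γ) / 2 := by linarith
      have h_tm_tf1 : s + (tf1 - s - γ) / 2 ≤ tf1 := by linarith
      have g1 := traj_slope_ge x (w + a * s) (-a) hcont hdiff hs.1
        (le_trans h_tm_tf1 htf) h_s_tm
        (fun t ht => hanchor_s_lo t ⟨ht.1.le, le_trans ht.2.le (le_trans h_tm_tf1 htf)⟩)
      have g2 := traj_slope_ge x (vmax - a * tf1) a hcont hdiff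
        (le_trans hs.1 h_s_tm) htf h_tm_tf1
        (fun t ht => by
          have := hanchor_tf1 t ⟨le_trans hs.1 (le_trans h_s_tm ht.1.le), ht.2.le⟩
          linarith)
      rw [hwγ] at g1
      have hprod : 0 ≤ (a * ((s - (tf1 - ρ - ρ)) - γ)) * (3 * (tf1 - s) - 2 * ρ - γ) :=
        mul_nonneg (mul_nonneg ha.le (by linarith)) (by linarith)
      linarith [g1, g2, hxtf1, haρ, hprod]
  · -- tacc < s ≤ tf1 : final parabola
    have g := traj_slope_ge x (vmax - a * tf1) a hcont hdiff hs.1 htf h3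
      (fun t ht => by
        have := hanchor_tf1 t ⟨le_trans hs.1 ht.1.le, ht.2.le⟩
        linarith)
    linarith [g, hxtf1, haρ]
  · -- tf1 < s : final line
    push_neg at h3
    have b := traj_slope_le x vmax 0 hcont hdiff ht₀.le hs.2 h3.le
      (fun t ht => by
        have := (hbd t ⟨le_trans ht₀.le ht.1.le, le_trans ht.2.le hs.2⟩).2
        simpa using this)
    linarith [b, hsafe]
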